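/- If u ∈ V is well positioned (m(u) ≤ 2·MinMed), then for every z ∈ V, dist(z,u) ≤ 3·m(z). -/
import Mathlib


open Finset

/-- The `Q`-quantile distance of `u` to the finite point set `V`: the smallest radius `r`
such that the closed ball of radius `r` around `u` contains at least `Q` points of `V`. -/
noncomputable def medDist {X : Type*} [MetricSpace X] (V : Finset X) (Q : ℕ) (u : X) : ℝ :=
  sInf {r : ℝ | Q ≤ (V.filter fun v => dist u v ≤ r).card}

/-- The median distance `m(u)`: the `⌈1+n/2⌉`-th smallest distance from `u` to `V`
(where `⌈1+n/2⌉ = (n+1)/2 + 1` using integer division). -/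
noncomputable def med {X : Type*} [MetricSpace X] (V : Finset X) (u : X) : ℝ :=
  medDist V ((V.card + 1) / 2 + 1) u

lemma medDist_mem {X : Type*} [MetricSpace X] (V : Finset X) (Q : ℕ) (u : X)
    (hQ1 : 1 ≤ Q) (hQn : Q ≤ V.card) :
    Q ≤ (V.filter fun v => dist u v ≤ medDist V Q u).card := by
  have hVne : V.Nonempty := card_pos.mp (lt_of_lt_of_le hQ1 hQn)
  set S : Set ℝ := {r : ℝ | Q ≤ (V.filter fun v => dist u v ≤ r).card} with hS
  have hSne : S.Nonempty := by
    refine ⟨V.sup' hVne (dist u), ?_⟩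
    have hfil : V.filter (fun v => dist u v ≤ V.sup' hVne (dist u)) = V := by
      apply filter_true_of_mem
      intro v hv; exact le_sup' (dist u) hv
    show Q ≤ (V.filter (fun v => dist u v ≤ V.sup' hVne (dist u))).card
    rw [hfil]; exact hQn
  by_contra hcon
  push_neg at hcon
  set E := V.filter (fun v => ¬ dist u v ≤ medDist V Q u) with hE
  have hEne : E.Nonempty := by
    rcases Finset.eq_empty_or_nonempty E with h | h
    · exfalso
      have hfil : V.filter (fun v => dist u v ≤ medDist V Q u) = V := by
        apply filter_true_of_mem
        intro v hv
        by_contra hvc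
        exact Finset.notMem_empty v (h ▸ Finset.mem_filter.mpr ⟨hv, hvc⟩)
      rw [hfil] at hcon
      omega
    · exact h
  set ε := E.inf' hEne (fun v => dist u v - medDist V Q u) with hε
  have hεpos : 0 < ε := by
    rw [hε, Finset.lt_inf'_iff]
    intro v hv
    have hv' := Finset.mem_filter.mp hv
    linarith [not_le.mp hv'.2]
  obtain ⟨s, hsS, hslt⟩ := Real.lt_sInf_add_pos hSne hεpos
  have hsub : V.filter (fun v => dist u v ≤ s) ⊆
      V.filter (fun v => dist u v ≤ medDist V Q u) := by
    intro v hv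
    have hv' := Finset.mem_filter.mp hv
    refine Finset.mem_filter.mpr ⟨hv'.1, ?_⟩
    by_contra hvc
    have hvE : v ∈ E := Finset.mem_filter.mpr ⟨hv'.1, hvc⟩
    have h1 : ε ≤ dist u v - medDist V Q u := Finset.inf'_le _ hvE
    have h2 : s < medDist V Q u + ε := hslt
    linarith [hv'.2]
  have : Q ≤ (V.filter (fun v => dist u v ≤ medDist V Q u)).card :=
    le_trans hsS (Finset.card_le_card hsub)
  omega

/-- If `u ∈ V` is well positioned (`m(u) ≤ 2·MinMed`, i.e. `m(u) ≤ 2·m(w)`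
for every `w ∈ V`), then for every `z ∈ V`, `dist z u ≤ 3·m(z)`. -/
theorem stmt5 {X : Type*} [MetricSpace X] (V : Finset X)
    (hQ : (V.card + 1) / 2 + 1 ≤ V.card)
    (u : X) (hu : u ∈ V) (hwp : ∀ w ∈ V, med V u ≤ 2 * med V w) :
    ∀ z ∈ V, dist z u ≤ 3 * med V z := by
  classical
  intro z hz
  set Q := (V.card + 1) / 2 + 1 with hQdef
  have hQ1 : 1 ≤ Q := by omega
  have hA := medDist_mem V Q u hQ1 hQ
  have hB := medDist_mem V Q z hQ1 hQ
  set A := V.filter (fun v => dist u v ≤ medDist V Q u) with hAdef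
  set B := V.filter (fun v => dist z v ≤ medDist V Q z) with hBdef
  have hUn : (A ∪ B).card ≤ V.card :=
    Finset.card_le_card (Finset.union_subset (filter_subset _ _) (filter_subset _ _))
  have hkey : (A ∪ B).card + (A ∩ B).card = A.card + B.card :=
    Finset.card_union_add_card_inter A B
  have h2Q : V.card < 2 * Q := by omega
  have hint : 0 < (A ∩ B).card := by omega
  obtain ⟨v, hv⟩ := Finset.card_pos.mp hint
  have hvA := Finset.mem_filter.mp (Finset.mem_of_mem_inter_left hv)
  have hvB := Finset.mem_filter.mp (Finset.mem_of_mem_inter_right hv)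
  have htri : dist z u ≤ dist z v + dist u v := by
    rw [dist_comm u v]; exact dist_triangle z v u
  have hwpz : med V u ≤ 2 * med V z := hwp z hz
  have hmed : dist z u ≤ med V z + med V u := by
    calc dist z u ≤ dist z v + dist u v := htri
      _ ≤ med V z + med V u := add_le_add hvB.2 hvA.2
  linarith
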